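/- For any n×n complex matrix j and any m×m complex matrix k, the matrix exponential of the Kronecker sum factorizes as exp(j ⊗ I_m + I_n ⊗ k) = exp(j) ⊗ exp(k). (This identity underlies the commutativity of the diagram relating the exponential maps from differential Jones matrices to Jones matrices and from differential Mueller matrices to Mueller matrices.) -/

import Mathlib

open Matrix Kronecker

attribute [local instance] Matrix.linftyOpNormedRing Matrix.linftyOpNormedAlgebra

/-- The ring hom `A ↦ A ⊗ₖ 1`. -/
def kronRight (n m : ℕ) :
    Matrix (Fin n) (Fin n) ℂ →+* Matrix (Fin n × Fin m) (Fin n × Fin m) ℂ where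
  toFun A := A ⊗ₖ (1 : Matrix (Fin m) (Fin m) ℂ)
  map_one' := Matrix.one_kronecker_one
  map_mul' A B := by rw [← Matrix.mul_kronecker_mul, one_mul]
  map_zero' := Matrix.zero_kronecker _
  map_add' A B := Matrix.add_kronecker A B _

/-- The ring hom `B ↦ 1 ⊗ₖ B`. -/
def kronLeft (n m : ℕ) :
    Matrix (Fin m) (Fin m) ℂ →+* Matrix (Fin n × Fin m) (Fin n × Fin m) ℂ where
  toFun B := (1 : Matrix (Fin n) (Fin n) ℂ) ⊗ₖ B
  map_one' := Matrix.one_kronecker_one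
  map_mul' A B := by rw [← Matrix.mul_kronecker_mul, one_mul]
  map_zero' := Matrix.kronecker_zero _
  map_add' A B := Matrix.kronecker_add _ A B

lemma continuous_kronRight (n m : ℕ) : Continuous (kronRight n m) := by
  apply continuous_matrix
  intro p q
  simp only [kronRight, RingHom.coe_mk, MonoidHom.coe_mk, OneHom.coe_mk,
    Matrix.kroneckerMap_apply]
  exact (continuous_id.matrix_elem p.1 q.1).mul continuous_const

lemma continuous_kronLeft (n m : ℕ) : Continuous (kronLeft n m) := by
  apply continuous_matrix
  intro p q
  simp only [kronLeft, RingHom.coe_mk, MonoidHom.coe_mk, OneHom.coe_mk,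
    Matrix.kroneckerMap_apply]
  exact continuous_const.mul (continuous_id.matrix_elem p.2 q.2)

/-- The matrix exponential of a Kronecker sum factorizes as the Kronecker product of the
matrix exponentials: exp(j ⊗ I + I ⊗ k) = exp(j) ⊗ exp(k). -/
theorem exp_kronecker_sum (n m : ℕ)
    (j : Matrix (Fin n) (Fin n) ℂ) (k : Matrix (Fin m) (Fin m) ℂ) :
    NormedSpace.exp (j ⊗ₖ (1 : Matrix (Fin m) (Fin m) ℂ)
        + (1 : Matrix (Fin n) (Fin n) ℂ) ⊗ₖ k)
      = NormedSpace.exp j ⊗ₖ NormedSpace.exp k := by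
  have hcomm : Commute (j ⊗ₖ (1 : Matrix (Fin m) (Fin m) ℂ))
      ((1 : Matrix (Fin n) (Fin n) ℂ) ⊗ₖ k) := by
    unfold Commute SemiconjBy
    rw [← Matrix.mul_kronecker_mul, ← Matrix.mul_kronecker_mul, one_mul, mul_one,
      one_mul, mul_one]
  rw [Matrix.exp_add_of_commute _ _ hcomm]
  have h1 : NormedSpace.exp (j ⊗ₖ (1 : Matrix (Fin m) (Fin m) ℂ))
      = NormedSpace.exp j ⊗ₖ (1 : Matrix (Fin m) (Fin m) ℂ) :=
    (NormedSpace.map_exp (kronRight n m) (continuous_kronRight n m) j).symm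
  have h2 : NormedSpace.exp ((1 : Matrix (Fin n) (Fin n) ℂ) ⊗ₖ k)
      = (1 : Matrix (Fin n) (Fin n) ℂ) ⊗ₖ NormedSpace.exp k :=
    (NormedSpace.map_exp (kronLeft n m) (continuous_kronLeft n m) k).symm
  rw [h1, h2, ← Matrix.mul_kronecker_mul, one_mul, mul_one]
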